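/- Let f : [0,1]^d → ℝ be integrable with ∫ f = 0 and satisfy f(x_{d−1}, 1−x_d) = −f(x_{d−1}, x_d), with f ≥ 0 on {x_d ≥ 1/2}. Then W₁(f⁺, f⁻) ≤ 2∫_{[0,1]^d} (x_d − 1/2)·f⁺(x) dx, realized by the reflection transport plan ρ(x,·) = f⁺(x) δ_{x̃}, where x̃ = (x_{d−1}, 1 − x_d). -/

import Mathlib

open MeasureTheory
open scoped NNReal ENNReal

/-- The 1-Wasserstein (Vaserstein) distance, via Kantorovich–Rubinstein duality. -/
noncomputable def W1 {α : Type*} [MeasurableSpace α] [PseudoMetricSpace α]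
    (μ ν : Measure α) : ℝ :=
  sSup { c : ℝ | ∃ h : α → ℝ, LipschitzWith 1 h ∧ c = |(∫ x, h x ∂μ) - ∫ x, h x ∂ν| }

/-- If `f` on the unit cube has zero mean, is antisymmetric under reflection of the last
coordinate about `1/2`, and is nonnegative on `{x_d ≥ 1/2}`, then
`W₁(f⁺, f⁻) ≤ 2 ∫ (x_d - 1/2) f⁺(x) dx` (realized by the reflection transport plan). -/
theorem reflection_transport_bound (d : ℕ) (hd : 1 ≤ d)
    (Q : Set (EuclideanSpace ℝ (Fin d)))
    (hQ : Q = {x | ∀ i, x i ∈ Set.Icc (0:ℝ) 1})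
    (f : EuclideanSpace ℝ (Fin d) → ℝ)
    (hint : IntegrableOn f Q volume)
    (hmean : ∫ x in Q, f x = 0)
    (hsym : ∀ x : EuclideanSpace ℝ (Fin d),
      f (WithLp.toLp 2 (Function.update x ⟨d - 1, by omega⟩ (1 - x ⟨d - 1, by omega⟩))) = - f x)
    (hpos : ∀ x ∈ Q, (1:ℝ)/2 ≤ x ⟨d - 1, by omega⟩ → 0 ≤ f x) :
    W1 ((volume.restrict Q).withDensity (fun x => ENNReal.ofReal (f x)))
        ((volume.restrict Q).withDensity (fun x => ENNReal.ofReal (- f x)))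
      ≤ 2 * ∫ x in Q, (x ⟨d - 1, by omega⟩ - 1/2) * max (f x) 0 := by
  classical
  set i : Fin d := ⟨d - 1, by omega⟩ with hidef
  set σ : EuclideanSpace ℝ (Fin d) → EuclideanSpace ℝ (Fin d) :=
    fun x => WithLp.toLp 2 (Function.update x i (1 - x i)) with hσdef
  set p : EuclideanSpace ℝ (Fin d) → ℝ := fun x => max (f x) 0 with hpdef
  -- basic coordinate facts about σ
  have hσi : ∀ x : EuclideanSpace ℝ (Fin d), σ x i = 1 - x i := fun x =>
    Function.update_self i _ x
  have hσj : ∀ (x : EuclideanSpace ℝ (Fin d)) (j : Fin d), j ≠ i → σ x j = x j := fun x j hj =>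
    Function.update_of_ne hj _ x
  have hσinv : ∀ x : EuclideanSpace ℝ (Fin d), σ (σ x) = x := by
    intro x
    ext j
    by_cases hj : j = i
    · subst hj; rw [hσi, hσi]; ring
    · rw [hσj _ _ hj, hσj _ _ hj]
  have hσQ : ∀ x : EuclideanSpace ℝ (Fin d), x ∈ Q → σ x ∈ Q := by
    intro x hx
    rw [hQ] at hx ⊢
    intro j
    by_cases hj : j = i
    · rw [hj, hσi]
      have h1 := hx i
      exact ⟨by linarith [h1.2], by linarith [h1.1]⟩
    · rw [hσj _ _ hj]; exact hx j
  have hσpre : σ ⁻¹' Q = Q := by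
    ext x
    constructor
    · intro hx
      have h2 := hσQ (σ x) hx
      rwa [hσinv] at h2
    · exact fun hx => hσQ x hx
  -- measurability
  have hσapp : ∀ (x : EuclideanSpace ℝ (Fin d)) (j : Fin d),
      σ x j = if j = i then 1 - x i else x j := by
    intro x j
    by_cases hj : j = i
    · rw [if_pos hj, hj, hσi]
    · rw [if_neg hj, hσj x j hj]
  have hσmeas : Measurable σ := by
    apply (WithLp.measurable_toLp 2 _).comp (measurable_pi_lambda _ ?_)
    intro j
    show Measurable (fun x : EuclideanSpace ℝ (Fin d) => σ x j)
    have h3 : (fun x : EuclideanSpace ℝ (Fin d) => σ x j)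
        = fun x : EuclideanSpace ℝ (Fin d) => if j = i then 1 - x i else x j := by
      funext x; exact hσapp x j
    rw [h3]
    by_cases hj : j = i
    · simp only [if_pos hj]
      exact measurable_const.sub ((measurable_pi_apply i).comp (WithLp.measurable_ofLp 2 _))
    · simp only [if_neg hj]
      exact (measurable_pi_apply j).comp (WithLp.measurable_ofLp 2 _)
  have hQm : MeasurableSet Q := by
    rw [hQ]
    have h4 : {x : EuclideanSpace ℝ (Fin d) | ∀ j, x j ∈ Set.Icc (0:ℝ) 1}
        = ⋂ j, (fun x : EuclideanSpace ℝ (Fin d) => x j) ⁻¹' Set.Icc 0 1 := by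
      ext x; simp [Set.mem_iInter]
    rw [h4]
    exact MeasurableSet.iInter fun j => ((measurable_pi_apply j).comp (WithLp.measurable_ofLp 2 _)) measurableSet_Icc
  -- measure preservation
  have h1 : MeasurePreserving (fun t : ℝ => 1 - t) volume volume := by
    have h5 := (measurePreserving_add_left (volume : Measure ℝ) 1).comp
      (Measure.measurePreserving_neg (volume : Measure ℝ))
    simpa [Function.comp_def, sub_eq_add_neg] using h5
  have hMP : MeasurePreserving σ (volume : Measure (EuclideanSpace ℝ (Fin d))) volume := by
    have hpi : MeasurePreserving
        (fun (a : Fin d → ℝ) (j : Fin d) => if j = i then 1 - a j else a j)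
        (Measure.pi fun _ => volume) (Measure.pi fun _ => volume) := by
      have hf : ∀ j : Fin d, MeasurePreserving
          (fun t : ℝ => if j = i then 1 - t else t) volume volume := by
        intro j
        by_cases hj : j = i
        · simpa [hj] using h1
        · simpa [hj, Function.id_def] using MeasurePreserving.id (volume : Measure ℝ)
      exact measurePreserving_pi _ _ hf
    have hvp : (volume : Measure (Fin d → ℝ)) = Measure.pi fun _ => volume := volume_pi
    rw [← hvp] at hpi
    have epre := EuclideanSpace.volume_preserving_symm_measurableEquiv_toLp (Fin d)
    have hes : MeasurePreserving (MeasurableEquiv.toLp 2 (Fin d → ℝ))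
        (volume : Measure (Fin d → ℝ)) volume :=
      MeasurePreserving.symm _ epre
    have hcomp := (hes.comp hpi).comp epre
    have h7 : ((⇑(MeasurableEquiv.toLp 2 (Fin d → ℝ)) ∘
        (fun (a : Fin d → ℝ) (j : Fin d) => if j = i then 1 - a j else a j)) ∘
        ⇑(MeasurableEquiv.toLp 2 (Fin d → ℝ)).symm) = σ := by
      funext x
      ext j
      rw [hσapp x j]
      show (if j = i then 1 - x j else x j) = _
      by_cases hj : j = i
      · rw [if_pos hj, if_pos hj, hj]
      · rw [if_neg hj, if_neg hj]
    rwa [h7] at hcomp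
  have hMPQ : MeasurePreserving σ (volume.restrict Q) (volume.restrict Q) := by
    have h8 := hMP.restrict_preimage (s := Q) hQm
    rwa [hσpre] at h8
  have hσemb : MeasurableEmbedding σ := by
    let e : EuclideanSpace ℝ (Fin d) ≃ᵐ EuclideanSpace ℝ (Fin d) :=
      { toFun := σ, invFun := σ, left_inv := hσinv, right_inv := hσinv,
        measurable_toFun := hσmeas, measurable_invFun := hσmeas }
    exact e.measurableEmbedding
  have hcv : ∀ g : EuclideanSpace ℝ (Fin d) → ℝ, (∫ x in Q, g (σ x)) = ∫ x in Q, g x := fun g =>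
    hMPQ.integral_comp hσemb g
  -- positivity facts
  have hfσ : ∀ x : EuclideanSpace ℝ (Fin d), f (σ x) = - f x := fun x => hsym x
  have hpzero : ∀ x ∈ Q, x i < 1/2 → p x = 0 := by
    intro x hx hxi
    have h9 : (1:ℝ)/2 ≤ σ x i := by rw [hσi x]; linarith
    have h10 : 0 ≤ f (σ x) := hpos (σ x) (hσQ x hx) h9
    rw [hfσ x] at h10
    have h11 : f x ≤ 0 := by linarith
    simpa [hpdef] using max_eq_right h11
  have hpnn : ∀ x : EuclideanSpace ℝ (Fin d), 0 ≤ p x := fun x => le_max_right _ _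
  have hrhs_nonneg : 0 ≤ 2 * ∫ x in Q, (x i - 1/2) * p x := by
    have h12 : 0 ≤ ∫ x in Q, (x i - 1/2) * p x := by
      apply setIntegral_nonneg hQm
      intro x hx
      rcases le_or_gt (1/2 : ℝ) (x i) with h | h
      · exact mul_nonneg (by linarith) (hpnn x)
      · rw [hpzero x hx h, mul_zero]
    linarith
  -- integrability of p
  have hp_int : Integrable p (volume.restrict Q) := hint.pos_part
  have hp_meas : AEStronglyMeasurable p (volume.restrict Q) := hp_int.aestronglyMeasurable
  have hfae : AEMeasurable f (volume.restrict Q) := hint.aemeasurable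
  -- now bound the sup
  show W1 _ _ ≤ 2 * ∫ x in Q, (x i - 1/2) * p x
  apply Real.sSup_le _ hrhs_nonneg
  rintro c ⟨h, hLip, rfl⟩
  -- bound for h on Q
  set C : ℝ := |h 0| + Real.sqrt d with hCdef
  have hCb : ∀ x ∈ Q, |h x| ≤ C := by
    intro x hx
    have h13 : |h x - h 0| ≤ dist x 0 := by
      have h14 := hLip.dist_le_mul x 0
      rw [NNReal.coe_one, one_mul] at h14
      rwa [Real.dist_eq] at h14
    have h15 : dist x (0 : EuclideanSpace ℝ (Fin d)) = ‖x‖ := dist_zero_right x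
    have h16 : ‖x‖ ≤ Real.sqrt d := by
      rw [EuclideanSpace.norm_eq]
      have h17 : (∑ j, ‖x j‖ ^ 2) ≤ ∑ _j : Fin d, (1:ℝ) := by
        apply Finset.sum_le_sum
        intro j _
        rw [hQ] at hx
        have h18 := hx j
        have hb : |x j| ≤ 1 := abs_le.mpr ⟨by linarith [h18.1], h18.2⟩
        calc ‖x j‖ ^ 2 = |x j| ^ 2 := by rw [Real.norm_eq_abs]
          _ ≤ 1 ^ 2 := pow_le_pow_left₀ (abs_nonneg _) hb 2
          _ = 1 := one_pow 2
      calc Real.sqrt (∑ j, ‖x j‖ ^ 2) ≤ Real.sqrt (∑ _j : Fin d, (1:ℝ)) :=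
            Real.sqrt_le_sqrt h17
        _ = Real.sqrt d := by simp
    calc |h x| = |h 0 + (h x - h 0)| := by ring_nf
      _ ≤ |h 0| + |h x - h 0| := abs_add_le _ _
      _ ≤ |h 0| + Real.sqrt d := by
          apply add_le_add le_rfl
          calc |h x - h 0| ≤ dist x 0 := h13
            _ = ‖x‖ := h15
            _ ≤ Real.sqrt d := h16
  have hh_cont : Continuous h := hLip.continuous
  -- compute the two integrals against the densities
  have hμcomp : ∀ (F : EuclideanSpace ℝ (Fin d) → ℝ), AEMeasurable F (volume.restrict Q) →
      (∫ x, h x ∂((volume.restrict Q).withDensity (fun x => ENNReal.ofReal (F x))))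
        = ∫ x in Q, max (F x) 0 * h x := by
    intro F hF
    have hg : AEMeasurable (fun x => Real.toNNReal (F x)) (volume.restrict Q) :=
      measurable_real_toNNReal.comp_aemeasurable hF
    have h0 := integral_withDensity_eq_integral_smul₀ hg h
    have h1' : ((volume.restrict Q).withDensity fun x => ENNReal.ofReal (F x)) =
        ((volume.restrict Q).withDensity fun x => ((Real.toNNReal (F x) : ℝ≥0) : ℝ≥0∞)) := rfl
    rw [h1', h0]
    apply integral_congr_ae
    filter_upwards with x
    rw [NNReal.smul_def, smul_eq_mul, Real.coe_toNNReal']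
  have hμ : (∫ x, h x ∂((volume.restrict Q).withDensity (fun x => ENNReal.ofReal (f x))))
      = ∫ x in Q, p x * h x := hμcomp f hfae
  have hν : (∫ x, h x ∂((volume.restrict Q).withDensity (fun x => ENNReal.ofReal (- f x))))
      = ∫ x in Q, p (σ x) * h x := by
    rw [hμcomp (fun x => - f x) hfae.neg]
    apply integral_congr_ae
    filter_upwards with x
    congr 1
    rw [hpdef]
    simp only []
    rw [hfσ x]
  have hν2 : (∫ x in Q, p (σ x) * h x) = ∫ x in Q, p x * h (σ x) := by
    have h19 := hcv (fun y => p y * h (σ y))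
    have heq : (fun x => p (σ x) * h (σ (σ x))) = fun x => p (σ x) * h x := by
      funext x; rw [hσinv]
    calc (∫ x in Q, p (σ x) * h x) = ∫ x in Q, p (σ x) * h (σ (σ x)) := by rw [heq]
      _ = ∫ x in Q, p x * h (σ x) := h19
  -- integrability of the products
  have hmulint : ∀ g : EuclideanSpace ℝ (Fin d) → ℝ,
      AEStronglyMeasurable g (volume.restrict Q) →
      (∀ x ∈ Q, |g x| ≤ C) → Integrable (fun x => p x * g x) (volume.restrict Q) := by
    intro g hgm hgb
    apply Integrable.mono' (hp_int.const_mul C) (hp_meas.mul hgm)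
    filter_upwards [self_mem_ae_restrict hQm] with x hx
    rw [Real.norm_eq_abs]
    show |p x * g x| ≤ C * p x
    rw [abs_mul, abs_of_nonneg (hpnn x)]
    calc p x * |g x| ≤ p x * C := mul_le_mul_of_nonneg_left (hgb x hx) (hpnn x)
      _ = C * p x := mul_comm _ _
  have hA : Integrable (fun x => p x * h x) (volume.restrict Q) :=
    hmulint h hh_cont.aestronglyMeasurable hCb
  have hB : Integrable (fun x => p x * h (σ x)) (volume.restrict Q) :=
    hmulint (fun x => h (σ x)) (hh_cont.measurable.comp hσmeas).aestronglyMeasurable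
      (fun x hx => hCb (σ x) (hσQ x hx))
  -- the dominating function is integrable
  have hxicont : Continuous (fun x : EuclideanSpace ℝ (Fin d) => x i) := (continuous_apply i).comp (PiLp.continuous_ofLp 2 _)
  have hD : Integrable (fun x => (2 * (x i - 1/2)) * p x) (volume.restrict Q) := by
    apply Integrable.mono' (hp_int.const_mul 2)
      ((((((measurable_pi_apply i).comp (WithLp.measurable_ofLp 2 (Fin d → ℝ))).sub measurable_const).const_mul
        (2:ℝ)).aestronglyMeasurable).mul hp_meas)
    filter_upwards [self_mem_ae_restrict hQm] with x hx
    rw [Real.norm_eq_abs]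
    show |2 * (x i - 1/2) * p x| ≤ 2 * p x
    rw [abs_mul, abs_of_nonneg (hpnn x)]
    have hxib : |2 * (x i - 1/2)| ≤ 2 := by
      rw [hQ] at hx
      have h20 := hx i
      rw [abs_mul, abs_two]
      have h21 : |x i - 1/2| ≤ 1 := abs_le.mpr ⟨by linarith [h20.1], by linarith [h20.2]⟩
      linarith
    exact mul_le_mul_of_nonneg_right hxib (hpnn x)
  -- the key pointwise bound
  have hkey : ∀ x ∈ Q, |p x * h x - p x * h (σ x)| ≤ (2 * (x i - 1/2)) * p x := by
    intro x hx
    rw [← mul_sub, abs_mul, abs_of_nonneg (hpnn x)]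
    rcases le_or_gt (1/2 : ℝ) (x i) with hhalf | hhalf
    · have hdist : |h x - h (σ x)| ≤ |2 * x i - 1| := by
        have h22 : dist (h x) (h (σ x)) ≤ dist x (σ x) := by
          have h23 := hLip.dist_le_mul x (σ x)
          rwa [NNReal.coe_one, one_mul] at h23
        rw [Real.dist_eq] at h22
        have h24 : dist x (σ x) = |2 * x i - 1| := by
          rw [EuclideanSpace.dist_eq]
          have hsum : (∑ j, dist (x j) (σ x j) ^ 2) = dist (x i) (σ x i) ^ 2 := by
            apply Finset.sum_eq_single_of_mem i (Finset.mem_univ i)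
            intro j _ hj
            rw [hσj x j hj, dist_self]
            norm_num
          rw [hsum, Real.sqrt_sq dist_nonneg, hσi, Real.dist_eq]
          congr 1; ring
        linarith
      have h25 : |2 * x i - 1| = 2 * (x i - 1/2) := by
        rw [abs_of_nonneg (by linarith)]; ring
      rw [h25] at hdist
      calc p x * |h x - h (σ x)| ≤ p x * (2 * (x i - 1/2)) :=
            mul_le_mul_of_nonneg_left hdist (hpnn x)
        _ = (2 * (x i - 1/2)) * p x := mul_comm _ _
    · rw [hpzero x hx hhalf]; simp
  -- put it all together
  rw [hμ, hν, hν2, ← integral_sub hA hB]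
  calc |∫ x in Q, (p x * h x - p x * h (σ x))|
      ≤ ∫ x in Q, |p x * h x - p x * h (σ x)| := by
        simpa [Real.norm_eq_abs] using
          norm_integral_le_integral_norm (μ := volume.restrict Q)
            (f := fun x => p x * h x - p x * h (σ x))
    _ ≤ ∫ x in Q, (2 * (x i - 1/2)) * p x :=
        setIntegral_mono_on (hA.sub hB).abs hD hQm hkey
    _ = 2 * ∫ x in Q, (x i - 1/2) * p x := by
        have h26 : (fun x : EuclideanSpace ℝ (Fin d) => (2 * (x i - 1/2)) * p x)
            = fun x : EuclideanSpace ℝ (Fin d) => 2 * ((x i - 1/2) * p x) := by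
          funext x; ring
        rw [h26, integral_const_mul]
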